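/- Let D be a Dedekind domain with field of fractions F, where F is a totally real number field and L is a CM field with maximal totally real subfield F. Then any D-subalgebra R of the integral closure of D in L satisfying R ⊗ ℚ = L is a Gorenstein ring. -/

import Mathlib

/-- A number field (or any `ℚ`-algebra) is *totally real* if every complex embedding
takes values in the reals. -/
def IsTotallyRealField (F : Type*) [Field F] : Prop :=
  ∀ (φ : F →+* ℂ) (x : F), (starRingEnd ℂ) (φ x) = φ x

/-- A field is *totally imaginary* if no complex embedding takes values in the reals. -/
def IsTotallyImaginaryField (K : Type*) [Field K] : Prop :=
  ∀ φ : K →+* ℂ, ∃ x : K, (starRingEnd ℂ) (φ x) ≠ φ x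

/-- An `R`-algebra `K` (thought of as the total quotient ring of the one-dimensional
ring `R`) makes `R` a *Gorenstein* ring if every nonzero finitely generated fractional
`R`-ideal whose multiplicator ring is `R` itself is invertible.  (For the orders
appearing in this paper this is the classical characterization, due to Bass, of
Gorenstein one-dimensional rings.) -/
def IsGorensteinOrder (R K : Type*) [CommRing R] [CommRing K] [Algebra R K] : Prop :=
  ∀ I : Submodule R K, I.FG → I ≠ ⊥ →
    (∀ x : K, (∀ y ∈ I, x * y ∈ I) ↔ x ∈ (algebraMap R K).range) →
    ∃ J : Submodule R K, I * J = 1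

open Polynomial in
theorem my_normal_of_finrank_two (F L : Type*) [Field F] [Field L] [Algebra F L]
    (h2 : Module.finrank F L = 2) : Normal F L := by
  have : FiniteDimensional F L := FiniteDimensional.of_finrank_eq_succ h2
  rw [normal_iff]
  intro x
  have hint : IsIntegral F x := Algebra.IsIntegral.isIntegral x
  refine ⟨hint, ?_⟩
  set p := minpoly F x with hp
  have hpd : p.natDegree ≤ 2 := h2 ▸ minpoly.natDegree_le x
  have hpne : p ≠ 0 := minpoly.ne_zero hint
  have hroot : IsRoot (p.map (algebraMap F L)) x := by
    have h := minpoly.aeval F x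
    rw [Polynomial.aeval_def, ← Polynomial.eval_map] at h
    exact h
  obtain ⟨q, hq⟩ := Polynomial.dvd_iff_isRoot.2 hroot
  rw [hq]
  have hmapne : p.map (algebraMap F L) ≠ 0 := by
    simpa using Polynomial.map_ne_zero (f := algebraMap F L) hpne
  have hqne : q ≠ 0 := by rintro rfl; simp [hq] at hmapne
  have hXne : (X - C x) ≠ 0 := X_sub_C_ne_zero x
  have hdeg : (X - C x).natDegree + q.natDegree ≤ 2 := by
    rw [← Polynomial.natDegree_mul hXne hqne, ← hq, Polynomial.natDegree_map]
    exact hpd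
  have hq1 : q.natDegree ≤ 1 := by
    rw [Polynomial.natDegree_X_sub_C] at hdeg; omega
  exact (Polynomial.Splits.X_sub_C _).mul (Polynomial.Splits.of_natDegree_le_one hq1)

theorem my_exists_conj (F L : Type*) [Field F] [Field L] [Algebra F L] [CharZero F]
    (h2 : Module.finrank F L = 2) :
    ∃ σ : L ≃ₐ[F] L, (∀ z, σ (σ z) = z) ∧
      (∀ z, σ z = z → z ∈ Set.range (algebraMap F L)) := by
  have hfd : FiniteDimensional F L := FiniteDimensional.of_finrank_eq_succ h2
  have hnormal : Normal F L := my_normal_of_finrank_two F L h2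
  have hgal : IsGalois F L := ⟨⟩
  have hcard : Fintype.card (L ≃ₐ[F] L) = 2 := by
    rw [← Nat.card_eq_fintype_card, IsGalois.card_aut_eq_finrank, h2]
  obtain ⟨σ, hσ1⟩ := Fintype.exists_ne_of_one_lt_card (by omega) (1 : L ≃ₐ[F] L)
  have hσσ : σ * σ = 1 := by
    have := pow_card_eq_one (G := L ≃ₐ[F] L) (x := σ)
    rwa [hcard, pow_two] at this
  classical
  have hall : ∀ g : L ≃ₐ[F] L, g = 1 ∨ g = σ := by
    intro g
    by_contra hg
    push_neg at hg
    have : ({1, σ, g} : Finset (L ≃ₐ[F] L)).card ≤ 2 := by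
      rw [← hcard]; exact Finset.card_le_univ _
    rw [Finset.card_insert_of_notMem (by simp [hσ1.symm, hg.1.symm, Ne]),
      Finset.card_insert_of_notMem (by simp [hg.2.symm]), Finset.card_singleton] at this
    omega
  refine ⟨σ, ?_, ?_⟩
  · intro z
    have : (σ * σ) z = z := by rw [hσσ]; rfl
    simpa using this
  · intro z hz
    have hfix : z ∈ IntermediateField.fixedField
        (IntermediateField.fixingSubgroup (⊥ : IntermediateField F L)) := by
      intro g
      rcases hall g.1 with h | h
      · show g.1 z = z; rw [h]; rfl
      · show g.1 z = z; rw [h]; exact hz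
    rw [IsGalois.fixedField_fixingSubgroup] at hfix
    rwa [IntermediateField.mem_bot] at hfix


theorem my_restrict_eq {D L : Type*} [CommRing D] [CommRing L] [Algebra D L]
    (R : Subalgebra D L) (s : Set L) :
    (Submodule.span (↥R) s).restrictScalars D =
      Submodule.span D s * Subalgebra.toSubmodule R := by
  apply le_antisymm
  · intro v hv
    rw [Submodule.restrictScalars_mem] at hv
    induction hv using Submodule.span_induction with
    | mem a ha =>
      simpa using Submodule.mul_mem_mul (Submodule.subset_span ha)
        (show (1:L) ∈ Subalgebra.toSubmodule R from R.one_mem)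
    | zero => exact Submodule.zero_mem _
    | add a b _ _ ha hb => exact Submodule.add_mem _ ha hb
    | smul r a _ ha =>
      have : (r : L) * a ∈ Submodule.span D s * Subalgebra.toSubmodule R := by
        refine Submodule.mul_induction_on ha (fun m hm n hn => ?_) (fun a b ha hb => ?_)
        · have : (r:L) * (m * n) = m * (n * (r:L)) := by ring
          rw [this]
          exact Submodule.mul_mem_mul hm
            (show n * (r:L) ∈ Subalgebra.toSubmodule R from R.mul_mem hn r.2)
        · rw [mul_add]; exact Submodule.add_mem _ ha hb
      simpa [Algebra.smul_def] using this
  · rw [Submodule.mul_le]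
    intro m hm n hn
    have hmI : m ∈ Submodule.span (↥R) s :=
      Submodule.span_le_restrictScalars D (↥R) s hm
    have : m * n = (⟨n, hn⟩ : ↥R) • m := by
      rw [Algebra.smul_def]; exact mul_comm m n
    rw [Submodule.restrictScalars_mem, this]
    exact Submodule.smul_mem _ _ hmI

theorem my_fg_restrict {D L : Type*} [CommRing D] [CommRing L] [Algebra D L]
    (R : Subalgebra D L) (hRfg : (Subalgebra.toSubmodule R).FG)
    (I : Submodule (↥R) L) (hI : I.FG) : (I.restrictScalars D).FG := by
  obtain ⟨s, hs⟩ := hI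
  rw [← hs, my_restrict_eq]
  exact Submodule.FG.mul ⟨s, rfl⟩ hRfg


theorem my_local
    (D F L : Type*) [CommRing D] [IsDomain D] [IsDedekindDomain D]
    [Field F] [Algebra D F] [IsFractionRing D F]
    [Field L] [Algebra F L] [Algebra D L] [IsScalarTower D F L]
    [FiniteDimensional F L] (h2 : Module.finrank F L = 2)
    (σ : L ≃ₐ[F] L)
    (J : Submodule D L) (hJfg : J.FG)
    (w : F)
    (hwnorm : ∀ v ∈ J, ∃ d : D, algebraMap D L d = algebraMap F L w * (v * σ v))
    (p : Ideal D) (hp : p.IsMaximal)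
    (x y z : L) (hx : x ∈ J) (hy : y ∈ J) (hz : z ∈ J) :
    ∃ s ∈ p.primeCompl, s • (x * σ y * algebraMap F L w * z) ∈ J := by
  classical
  haveI hpp : p.IsPrime := hp.isPrime
  set A := Localization.AtPrime p with hA
  haveI : IsDomain A :=
    IsLocalization.isDomain_of_le_nonZeroDivisors A p.primeCompl_le_nonZeroDivisors
  haveI : IsPrincipalIdealRing A := by
    by_cases hDf : IsField D
    · have hmapinj : Function.Injective (algebraMap D A) :=
        IsLocalization.injective A p.primeCompl_le_nonZeroDivisors
      have hfield : IsField A := by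
        refine ⟨exists_pair_ne A, mul_comm, ?_⟩
        intro a ha
        obtain ⟨⟨d, s⟩, hds⟩ := IsLocalization.surj p.primeCompl a
        have hs0 : algebraMap D A (s:D) ≠ 0 := by
          intro h
          have : (s:D) = 0 := by
            apply hmapinj; rw [h, map_zero]
          exact s.2 (this ▸ p.zero_mem)
        have hd0 : d ≠ 0 := by
          rintro rfl
          rw [map_zero] at hds
          rcases mul_eq_zero.1 hds with h | h
          · exact ha h
          · exact hs0 h
        obtain ⟨d', hd'⟩ := hDf.mul_inv_cancel hd0
        refine ⟨algebraMap D A s * algebraMap D A d', ?_⟩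
        rw [← mul_assoc, hds, ← map_mul, hd', map_one]
      letI := hfield.toField
      infer_instance
    · have hpne : p ≠ ⊥ := Ring.ne_bot_of_isMaximal_of_not_isField hp hDf
      haveI := IsLocalization.AtPrime.isDiscreteValuationRing_of_dedekind_domain D hpne A
      infer_instance
  have hunits : ∀ s : p.primeCompl, IsUnit (algebraMap D F (s:D)) := fun s =>
    IsLocalization.map_units F ⟨(s:D), p.primeCompl_le_nonZeroDivisors s.2⟩
  letI : Algebra A F := (IsLocalization.lift hunits).toAlgebra
  haveI : IsScalarTower D A F :=
    IsScalarTower.of_algebraMap_eq fun d => (IsLocalization.lift_eq hunits d).symm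
  letI : Algebra A L := ((algebraMap F L).comp (algebraMap A F)).toAlgebra
  haveI : IsScalarTower A F L := IsScalarTower.of_algebraMap_eq fun a => rfl
  haveI : IsScalarTower D A L := IsScalarTower.of_algebraMap_eq fun d => by
    show algebraMap D L d = algebraMap F L (algebraMap A F (algebraMap D A d))
    rw [← IsScalarTower.algebraMap_apply D A F, ← IsScalarTower.algebraMap_apply D F L]
  haveI : IsFractionRing A F :=
    IsFractionRing.isFractionRing_of_isDomain_of_isLocalization p.primeCompl A F
  have hAinj : Function.Injective (algebraMap A L) := fun a b h =>
    IsFractionRing.injective A F ((algebraMap F L).injective h)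
  set M : Submodule A L := Submodule.span A (J : Set L) with hM
  have hJM : ∀ v ∈ J, v ∈ M := fun v hv => Submodule.subset_span hv
  -- every element of M has a multiple in J
  have hcA : ∀ v ∈ M, ∃ s ∈ p.primeCompl, s • v ∈ J := by
    intro v hv
    induction hv using Submodule.span_induction with
    | mem v hv => exact ⟨1, p.primeCompl.one_mem, by simpa using hv⟩
    | zero => exact ⟨1, p.primeCompl.one_mem, by simp⟩
    | add v₁ v₂ _ _ h₁ h₂ =>
      obtain ⟨s₁, hs₁, hv₁⟩ := h₁
      obtain ⟨s₂, hs₂, hv₂⟩ := h₂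
      refine ⟨s₁ * s₂, mul_mem hs₁ hs₂, ?_⟩
      rw [smul_add]
      refine Submodule.add_mem _ ?_ ?_
      · rw [mul_comm, mul_smul]; exact Submodule.smul_mem _ _ hv₁
      · rw [mul_smul]; exact Submodule.smul_mem _ _ hv₂
    | smul a v _ h =>
      obtain ⟨s, hs, hv⟩ := h
      obtain ⟨⟨d, t⟩, hdt⟩ := IsLocalization.surj p.primeCompl a
      refine ⟨(t:D) * s, mul_mem t.2 hs, ?_⟩
      have key : (t:D) • (a • v) = d • v := by
        rw [← smul_assoc, Algebra.smul_def (A := A), mul_comm, hdt, algebraMap_smul]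
      have heq : ((t:D) * s) • (a • v) = d • (s • v) := by
        rw [mul_comm, mul_smul, key, smul_comm]
      rw [heq]
      exact Submodule.smul_mem _ _ hv
  -- M is finitely generated, torsion free, hence free of rank ≤ 2 over the PID A
  obtain ⟨T, hT⟩ := hJfg
  have hMT : Submodule.span A (↑T : Set L) = M := by
    rw [hM, ← hT]
    exact (Submodule.span_span_of_tower D A (↑T : Set L)).symm
  haveI : Module.Finite A ↥M := Module.Finite.iff_fg.mpr ⟨T, hMT⟩
  haveI : NoZeroSMulDivisors A ↥M := by
    refine ⟨fun {a m} h => ?_⟩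
    have h' : algebraMap A L a * (m : L) = 0 := by
      have h2 := congrArg (Subtype.val) h
      simpa [Algebra.smul_def] using h2
    rcases mul_eq_zero.1 h' with h'' | h''
    · left
      apply hAinj
      rw [h'', map_zero]
    · right; exact Subtype.ext h''
  haveI : Module.Free A ↥M := by
    haveI : Module.IsTorsionFree A ↥M := by
      refine ⟨fun r hr m₁ m₂ hm => ?_⟩
      have h0 : r • (m₁ - m₂) = 0 := by rw [smul_sub]; exact sub_eq_zero.2 hm
      rcases NoZeroSMulDivisors.eq_zero_or_eq_zero_of_smul_eq_zero h0 with h | h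
      · exact absurd h hr.ne_zero
      · exact sub_eq_zero.1 h
    exact Module.free_of_finite_type_torsion_free'
  set ι := Module.Free.ChooseBasisIndex A ↥M with hι
  set b : Module.Basis ι A ↥M := Module.Free.chooseBasis A ↥M with hb
  have hli : LinearIndependent A (fun i => ((b i : ↥M) : L)) :=
    b.linearIndependent.map' M.subtype (Submodule.ker_subtype M)
  have hliF : LinearIndependent F (fun i => ((b i : ↥M) : L)) :=
    hli.localization (Rₛ := F) (nonZeroDivisors A)
  have hcard : Fintype.card ι ≤ 2 := by
    have hc := hliF.fintype_card_le_finrank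
    rwa [h2] at hc
  -- extract two generators
  set e := Fintype.equivFin ι with he
  have hmono : ∀ i : ι, ((e i : Fin (Fintype.card ι)) : ℕ) < 2 := fun i =>
    lt_of_lt_of_le (e i).2 hcard
  set f : ι → Fin 2 := fun i => ⟨(e i : Fin (Fintype.card ι)), hmono i⟩ with hf
  have hfinj : Function.Injective f := by
    intro i j h
    apply e.injective
    have hval := congrArg Fin.val h
    exact Fin.ext hval
  set u : Fin 2 → L := fun j => if h : ∃ i, f i = j then ((b h.choose : ↥M) : L) else 0 with hu
  set α := u 0 with hα
  set β := u 1 with hβ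
  have huM : ∀ j, u j ∈ M := by
    intro j
    by_cases h : ∃ i, f i = j
    · simp only [hu, dif_pos h]; exact (b h.choose).2
    · simp only [hu, dif_neg h]; exact M.zero_mem
  have hαM : α ∈ M := huM 0
  have hβM : β ∈ M := huM 1
  have hbu : ∀ i : ι, ((b i : ↥M) : L) = u (f i) := by
    intro i
    have hex : ∃ i', f i' = f i := ⟨i, rfl⟩
    simp only [hu, dif_pos hex]
    have : hex.choose = i := hfinj hex.choose_spec
    rw [this]
  have hMspan : M = Submodule.span A {α, β} := by
    apply le_antisymm
    · have hMb : M = Submodule.map M.subtype ⊤ := (Submodule.map_subtype_top M).symm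
      rw [hMb, ← b.span_eq, Submodule.map_span]
      apply Submodule.span_le.2
      rintro _ ⟨_, ⟨i, rfl⟩, rfl⟩
      have : M.subtype (b i) = u (f i) := hbu i
      rw [this]
      apply Submodule.subset_span
      have : ∀ j : Fin 2, u j ∈ ({α, β} : Set L) := by
        intro j
        fin_cases j
        · exact Set.mem_insert _ _
        · exact Set.mem_insert_of_mem _ rfl
      exact this (f i)
    · apply Submodule.span_le.2
      rintro v hv
      rcases hv with rfl | hv
      · exact hαM
      · rw [Set.mem_singleton_iff] at hv
        subst hv
        exact hβM
  -- norm scalars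
  have hDLinj : Function.Injective (algebraMap D L) := by
    rw [IsScalarTower.algebraMap_eq D F L]
    exact (algebraMap F L).injective.comp (IsFractionRing.injective D F)
  have hσsmul : ∀ (d : D) (v : L), σ (d • v) = d • σ v := by
    intro d v
    rw [Algebra.smul_def, IsScalarTower.algebraMap_apply D F L, map_mul, AlgEquiv.commutes,
      ← IsScalarTower.algebraMap_apply D F L, ← Algebra.smul_def]
  have hnormA : ∀ v ∈ M, ∃ a : A, algebraMap A L a = algebraMap F L w * (v * σ v) := by
    intro v hv
    obtain ⟨s, hs, hsv⟩ := hcA v hv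
    obtain ⟨d, hd⟩ := hwnorm (s • v) hsv
    have hs0 : s ≠ 0 := fun h => hs (h ▸ p.zero_mem)
    have hss : s * s ∈ p.primeCompl := mul_mem hs hs
    refine ⟨IsLocalization.mk' A d ⟨s*s, hss⟩, ?_⟩
    have hcancel : algebraMap D L (s*s) ≠ 0 := by
      intro h
      exact mul_ne_zero hs0 hs0 (hDLinj (by rw [h, map_zero]))
    apply mul_left_cancel₀ hcancel
    have lhs : algebraMap D L (s*s) * algebraMap A L (IsLocalization.mk' A d ⟨s*s, hss⟩) =
        algebraMap D L d := by
      rw [IsScalarTower.algebraMap_apply D A L (s*s), ← map_mul,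
        IsLocalization.mk'_spec' A d ⟨s*s, hss⟩, ← IsScalarTower.algebraMap_apply D A L]
    rw [lhs, hd, hσsmul, Algebra.smul_def, Algebra.smul_def, map_mul]
    ring
  obtain ⟨aα, haα⟩ := hnormA α hαM
  obtain ⟨aβ, haβ⟩ := hnormA β hβM
  obtain ⟨aγ, haγ⟩ := hnormA (α + β) (Submodule.add_mem _ hαM hβM)
  have ham : algebraMap A L (aγ - aα - aβ) = algebraMap F L w * (α * σ β + β * σ α) := by
    rw [map_sub, map_sub, haα, haβ, haγ, map_add]
    ring
  set am := aγ - aα - aβ with ham'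
  set μ := algebraMap F L w with hμ
  have hσA : ∀ (a : A) (v : L), σ (algebraMap A L a * v) = algebraMap A L a * σ v := by
    intro a v
    rw [show algebraMap A L a = algebraMap F L (algebraMap A F a) from rfl, map_mul,
      AlgEquiv.commutes]
  have hsm : ∀ (a : A) (v : L), v ∈ M → algebraMap A L a * v ∈ M := fun a v hv => by
    have := M.smul_mem a hv
    rwa [Algebra.smul_def] at this
  -- the eight base cases
  have hbase : ∀ x' ∈ ({α, β} : Set L), ∀ y' ∈ ({α, β} : Set L), ∀ z' ∈ ({α, β} : Set L),
      x' * σ y' * μ * z' ∈ M := by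
    intro x' hx' y' hy' z' hz'
    simp only [Set.mem_insert_iff, Set.mem_singleton_iff] at hx' hy' hz'
    rcases hx' with rfl | rfl <;> rcases hy' with rfl | rfl <;> rcases hz' with rfl | rfl
    · have hq : α * σ α * μ * α = algebraMap A L aα * α := by rw [haα]; ring
      rw [hq]; exact hsm _ _ hαM
    · have hq : α * σ α * μ * β = algebraMap A L aα * β := by rw [haα]; ring
      rw [hq]; exact hsm _ _ hβM
    · have hq : α * σ β * μ * α = algebraMap A L am * α - algebraMap A L aα * β := by
        rw [ham, haα]; ring
      rw [hq]; exact Submodule.sub_mem _ (hsm _ _ hαM) (hsm _ _ hβM)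
    · have hq : α * σ β * μ * β = algebraMap A L aβ * α := by rw [haβ]; ring
      rw [hq]; exact hsm _ _ hαM
    · have hq : β * σ α * μ * α = algebraMap A L aα * β := by rw [haα]; ring
      rw [hq]; exact hsm _ _ hβM
    · have hq : β * σ α * μ * β = algebraMap A L am * β - algebraMap A L aβ * α := by
        rw [ham, haβ]; ring
      rw [hq]; exact Submodule.sub_mem _ (hsm _ _ hβM) (hsm _ _ hαM)
    · have hq : β * σ β * μ * α = algebraMap A L aβ * α := by rw [haβ]; ring
      rw [hq]; exact hsm _ _ hαM
    · have hq : β * σ β * μ * β = algebraMap A L aβ * β := by rw [haβ]; ring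
      rw [hq]; exact hsm _ _ hβM
  -- three levels of span induction
  have hstep1 : ∀ x' ∈ ({α, β} : Set L), ∀ y' ∈ ({α, β} : Set L),
      ∀ z', z' ∈ Submodule.span A ({α, β} : Set L) → x' * σ y' * μ * z' ∈ M := by
    intro x' hx' y' hy' z' hz'
    induction hz' using Submodule.span_induction with
    | mem v hv => exact hbase x' hx' y' hy' v hv
    | zero => rw [mul_zero]; exact M.zero_mem
    | add v₁ v₂ _ _ h₁ h₂ => rw [mul_add]; exact Submodule.add_mem _ h₁ h₂
    | smul a v _ h =>
      have hq : x' * σ y' * μ * (a • v) = algebraMap A L a * (x' * σ y' * μ * v) := by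
        rw [Algebra.smul_def]; ring
      rw [hq]; exact hsm _ _ h
  have hstep2 : ∀ x' ∈ ({α, β} : Set L), ∀ y', y' ∈ Submodule.span A ({α, β} : Set L) →
      ∀ z' ∈ M, x' * σ y' * μ * z' ∈ M := by
    intro x' hx' y' hy'
    induction hy' using Submodule.span_induction with
    | mem v hv =>
      intro z' hz'
      exact hstep1 x' hx' v hv z' (hMspan ▸ hz')
    | zero =>
      intro z' hz'
      rw [map_zero, mul_zero, zero_mul, zero_mul]
      exact M.zero_mem
    | add v₁ v₂ _ _ h₁ h₂ =>
      intro z' hz'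
      have hq : x' * σ (v₁ + v₂) * μ * z' = x' * σ v₁ * μ * z' + x' * σ v₂ * μ * z' := by
        rw [map_add]; ring
      rw [hq]; exact Submodule.add_mem _ (h₁ z' hz') (h₂ z' hz')
    | smul a v _ h =>
      intro z' hz'
      have hq : x' * σ (a • v) * μ * z' = algebraMap A L a * (x' * σ v * μ * z') := by
        rw [Algebra.smul_def, hσA]; ring
      rw [hq]; exact hsm _ _ (h z' hz')
  have hstep3 : ∀ x', x' ∈ Submodule.span A ({α, β} : Set L) →
      ∀ y' ∈ M, ∀ z' ∈ M, x' * σ y' * μ * z' ∈ M := by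
    intro x' hx'
    induction hx' using Submodule.span_induction with
    | mem v hv =>
      intro y' hy' z' hz'
      exact hstep2 v hv y' (hMspan ▸ hy') z' hz'
    | zero =>
      intro y' hy' z' hz'
      rw [zero_mul, zero_mul, zero_mul]
      exact M.zero_mem
    | add v₁ v₂ _ _ h₁ h₂ =>
      intro y' hy' z' hz'
      have hq : (v₁ + v₂) * σ y' * μ * z' = v₁ * σ y' * μ * z' + v₂ * σ y' * μ * z' := by
        ring
      rw [hq]; exact Submodule.add_mem _ (h₁ y' hy' z' hz') (h₂ y' hy' z' hz')
    | smul a v _ h =>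
      intro y' hy' z' hz'
      have hq : (a • v) * σ y' * μ * z' = algebraMap A L a * (v * σ y' * μ * z') := by
        rw [Algebra.smul_def]; ring
      rw [hq]; exact hsm _ _ (h y' hy' z' hz')
  have hΦM : x * σ y * μ * z ∈ M :=
    hstep3 x (hMspan ▸ hJM x hx) y (hJM y hy) z (hJM z hz)
  exact hcA _ hΦM

theorem my_key
    (D F L : Type*) [CommRing D] [IsDomain D] [IsDedekindDomain D]
    [Field F] [Algebra D F] [IsFractionRing D F] [CharZero F]
    [Field L] [Algebra F L] [Algebra D L] [IsScalarTower D F L]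
    (h2 : Module.finrank F L = 2)
    (R : Subalgebra D L) (hR : R ≤ integralClosure D L)
    (my_exists_conj : ∃ σ : L ≃ₐ[F] L, (∀ z, σ (σ z) = z) ∧
      (∀ z, σ z = z → z ∈ Set.range (algebraMap F L)))
    (my_fg_restrict : ∀ (I : Submodule (↥R) L), I.FG →
      ((Subalgebra.toSubmodule R).FG) → (I.restrictScalars D).FG)
    (my_local : ∀ (σ : L ≃ₐ[F] L) (J : Submodule D L), J.FG → ∀ w : F,
      (∀ v ∈ J, ∃ d : D, algebraMap D L d = algebraMap F L w * (v * σ v)) →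
      ∀ (p : Ideal D) (hp : p.IsMaximal),
      ∀ x y z : L, x ∈ J → y ∈ J → z ∈ J →
      ∃ s ∈ p.primeCompl, s • (x * σ y * algebraMap F L w * z) ∈ J) :
    IsGorensteinOrder ↥R L := by
  classical
  haveI hfd : FiniteDimensional F L := FiniteDimensional.of_finrank_eq_succ h2
  obtain ⟨σ, hσσ, hσfix⟩ := my_exists_conj
  intro I hIfg hIne hImul
  haveI : IsNoetherian D ↥(integralClosure D L) :=
    IsIntegralClosure.isNoetherian D F L (integralClosure D L)
  have hRfg : (Subalgebra.toSubmodule R).FG := by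
    set N₀ := Subalgebra.toSubmodule (integralClosure D L) with hN₀
    haveI hno : IsNoetherian D ↥N₀ := inferInstanceAs (IsNoetherian D ↥(integralClosure D L))
    have hle : Subalgebra.toSubmodule R ≤ N₀ := fun v hv => hR hv
    have hfgc : ((Subalgebra.toSubmodule R).comap N₀.subtype).FG := IsNoetherian.noetherian _
    have hmap := hfgc.map N₀.subtype
    rwa [Submodule.map_comap_subtype, inf_eq_right.mpr hle] at hmap
  have hJfg : (I.restrictScalars D).FG := my_fg_restrict I hIfg hRfg
  -- norm module
  set fflin : F →ₗ[D] L := (IsScalarTower.toAlgHom D F L).toLinearMap with hfflin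
  have hff : ∀ c : F, fflin c = algebraMap F L c := fun c => rfl
  have hσnorm : ∀ v : L, σ (v * σ v) = v * σ v := fun v => by
    rw [map_mul, hσσ, mul_comm]
  set NL : Submodule D L := Submodule.span D ((fun v => v * σ v) '' (I : Set L)) with hNL
  have hNLrange : NL ≤ LinearMap.range fflin := by
    rw [hNL]
    apply Submodule.span_le.2
    rintro _ ⟨v, hv, rfl⟩
    obtain ⟨c, hc⟩ := hσfix _ (hσnorm v)
    exact ⟨c, hc⟩
  set 𝔫 : Submodule D F := NL.comap fflin with h𝔫
  -- denominators
  obtain ⟨T, hT⟩ := hJfg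
  obtain ⟨q, hq0, hqint⟩ := exists_integral_multiples D F T
  have hqI : ∀ v ∈ I, IsIntegral D (q • v) := by
    intro v hv
    have hv' : v ∈ Submodule.span D (T : Set L) := by
      rw [hT]; exact hv
    have hle : Submodule.span D (T : Set L) ≤ Submodule.comap (LinearMap.lsmul D L q)
        (Subalgebra.toSubmodule (integralClosure D L)) := by
      apply Submodule.span_le.2
      intro t ht
      exact hqint t ht
    exact hle hv'
  have hfrac : IsFractional (nonZeroDivisors D) 𝔫 := by
    refine ⟨q * q, mul_mem (mem_nonZeroDivisors_of_ne_zero hq0)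
      (mem_nonZeroDivisors_of_ne_zero hq0), ?_⟩
    intro c hc
    have h1 : (q*q) • (fflin c) ∈ Subalgebra.toSubmodule (integralClosure D L) := by
      have hle : NL ≤ Submodule.comap (LinearMap.lsmul D L (q*q))
          (Subalgebra.toSubmodule (integralClosure D L)) := by
        apply Submodule.span_le.2
        rintro _ ⟨v, hv, rfl⟩
        have hqv : IsIntegral D (q • v) := hqI v hv
        have hqσv : IsIntegral D (q • σ v) := by
          have hmap := hqv.map ((AlgEquiv.restrictScalars D σ).toAlgHom)
          have heq : (AlgEquiv.restrictScalars D σ).toAlgHom (q • v) = q • σ v := by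
            simp
          rwa [heq] at hmap
        show IsIntegral D ((q*q) • (v * σ v))
        have heq : (q*q) • (v * σ v) = (q • v) * (q • σ v) := by
          rw [smul_mul_smul_comm]
        rw [heq]
        exact hqv.mul hqσv
      exact hle hc
    have hint : IsIntegral D (fflin ((q*q) • c)) := by
      rw [map_smul]
      exact h1
    have hintF : IsIntegral D ((q*q) • c) := by
      rw [← isIntegral_algHom_iff (IsScalarTower.toAlgHom D F L) (algebraMap F L).injective]
      exact hint
    obtain ⟨d, hd⟩ := IsIntegrallyClosed.isIntegral_iff.1 hintF
    exact ⟨d, hd⟩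
  set 𝔫f : FractionalIdeal (nonZeroDivisors D) F := ⟨𝔫, hfrac⟩ with h𝔫f
  have h𝔫0 : 𝔫f ≠ 0 := by
    obtain ⟨x₀, hx₀I, hx₀⟩ := (Submodule.ne_bot_iff I).1 hIne
    obtain ⟨c₀, hc₀⟩ := hσfix _ (hσnorm x₀)
    intro hz
    have hc₀𝔫 : c₀ ∈ 𝔫 := by
      show fflin c₀ ∈ NL
      rw [hff, hc₀]
      exact Submodule.subset_span ⟨x₀, hx₀I, rfl⟩
    have hσx₀ : σ x₀ ≠ 0 := fun hσ0 => hx₀ (by simpa using congrArg σ.symm hσ0)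
    have hc₀0 : c₀ ≠ 0 := by
      intro h
      rw [h, map_zero] at hc₀
      exact mul_ne_zero hx₀ hσx₀ hc₀.symm
    have hbot : (𝔫 : Submodule D F) = ⊥ := by
      have hco := congrArg
        (fun X : FractionalIdeal (nonZeroDivisors D) F => (X : Submodule D F)) hz
      exact (by simpa using hco : (𝔫f : Submodule D F) = ⊥)
    rw [hbot] at hc₀𝔫
    exact hc₀0 hc₀𝔫
  have hinv := mul_inv_cancel₀ h𝔫0
  set W : Submodule D F := ((𝔫f⁻¹ : FractionalIdeal (nonZeroDivisors D) F) : Submodule D F)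
    with hW
  have hWprop : ∀ w ∈ W, ∀ c ∈ 𝔫, ∃ d : D, algebraMap D F d = c * w := by
    intro w hw c hc
    have hcf : c ∈ 𝔫f := hc
    have hwf : w ∈ (𝔫f⁻¹ : FractionalIdeal (nonZeroDivisors D) F) := hw
    have hmm := FractionalIdeal.mul_mem_mul hcf hwf
    rw [hinv] at hmm
    exact (FractionalIdeal.mem_one_iff _).1 hmm
  have h1mem : (1 : F) ∈ (𝔫 : Submodule D F) * W := by
    have hco := congrArg
      (fun X : FractionalIdeal (nonZeroDivisors D) F => (X : Submodule D F)) hinv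
    simp only [FractionalIdeal.coe_mul, FractionalIdeal.coe_one] at hco
    have h11 : (1 : F) ∈ (1 : Submodule D F) := by
      rw [Submodule.one_eq_span]
      exact Submodule.mem_span_singleton_self 1
    rw [show ((𝔫f : Submodule D F)) = 𝔫 from rfl] at hco
    rw [hco]
    exact h11
  -- key fact
  have hwnormAll : ∀ w ∈ W, ∀ v ∈ I, ∃ d : D,
      algebraMap D L d = algebraMap F L w * (v * σ v) := by
    intro w hw v hv
    obtain ⟨c, hc⟩ := hσfix _ (hσnorm v)
    have hc𝔫 : c ∈ 𝔫 := by
      show fflin c ∈ NL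
      rw [hff, hc]
      exact Submodule.subset_span ⟨v, hv, rfl⟩
    obtain ⟨d, hd⟩ := hWprop w hw c hc𝔫
    refine ⟨d, ?_⟩
    rw [IsScalarTower.algebraMap_apply D F L, hd, map_mul, hc]
    ring
  have hcore : ∀ x ∈ I, ∀ y ∈ I, ∀ w ∈ W, ∀ z ∈ I,
      x * σ y * algebraMap F L w * z ∈ I := by
    intro x hxI y hyI w hw z hzI
    set Φ := x * σ y * algebraMap F L w * z with hΦ
    set 𝔞 : Ideal D := Submodule.comap (LinearMap.toSpanSingleton D L Φ)
      (I.restrictScalars D) with h𝔞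
    have h𝔞top : 𝔞 = ⊤ := by
      by_contra h𝔞ne
      obtain ⟨p, hpmax, hple⟩ := Ideal.exists_le_maximal _ h𝔞ne
      obtain ⟨s, hs, hsΦ⟩ := my_local σ (I.restrictScalars D) ⟨T, hT⟩ w
        (fun v hv => hwnormAll w hw v hv) p hpmax x y z hxI hyI hzI
      apply hs
      apply hple
      show LinearMap.toSpanSingleton D L Φ s ∈ I.restrictScalars D
      rw [LinearMap.toSpanSingleton_apply]
      exact hsΦ
    have h1 : (1:D) ∈ 𝔞 := h𝔞top ▸ Submodule.mem_top
    have h1' : (1:D) • Φ ∈ I := h1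
    simpa using h1'
  -- construct the inverse module
  set Jmod : Submodule (↥R) L := Submodule.span (↥R)
    ((fun pr : L × F => σ pr.1 * algebraMap F L pr.2) '' ((I : Set L) ×ˢ (W : Set F)))
    with hJmod
  refine ⟨Jmod, le_antisymm ?_ ?_⟩
  · rw [Submodule.mul_le]
    intro m hm n hn
    induction hn using Submodule.span_induction with
    | mem n hnmem =>
      obtain ⟨⟨v, w⟩, hvw, rfl⟩ := hnmem
      obtain ⟨hvI, hwW⟩ := hvw
      have hmul : ∀ t ∈ I, (m * (σ v * algebraMap F L w)) * t ∈ I := by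
        intro t ht
        have hc := hcore m hm v hvI w hwW t ht
        have heq : m * (σ v * algebraMap F L w) * t = m * σ v * algebraMap F L w * t := by
          ring
        rwa [heq]
      obtain ⟨r, hr⟩ := (hImul _).1 hmul
      rw [Submodule.mem_one]
      exact ⟨r, hr⟩
    | zero => rw [mul_zero]; exact Submodule.zero_mem _
    | add a b _ _ ha hb => rw [mul_add]; exact Submodule.add_mem _ ha hb
    | smul r a _ ha =>
      have heq : m * (r • a) = r • (m * a) := by
        rw [Algebra.smul_def, Algebra.smul_def]; ring
      rw [heq]; exact Submodule.smul_mem _ _ ha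
  · have hIJD : ∀ t ∈ (𝔫 : Submodule D F) * W, algebraMap F L t ∈ I * Jmod := by
      intro t ht
      refine Submodule.mul_induction_on ht ?_ ?_
      · intro c hc w hw
        have hcNL : fflin c ∈ NL := hc
        have hP : ∀ u ∈ NL, u * algebraMap F L w ∈ I * Jmod := by
          intro u hu
          induction hu using Submodule.span_induction with
          | mem u humem =>
            obtain ⟨v, hvI, rfl⟩ := humem
            have heq : (v * σ v) * algebraMap F L w = v * (σ v * algebraMap F L w) := by
              ring
            rw [heq]
            exact Submodule.mul_mem_mul hvI (Submodule.subset_span ⟨(v, w), ⟨hvI, hw⟩, rfl⟩)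
          | zero => rw [zero_mul]; exact Submodule.zero_mem _
          | add a b _ _ ha hb => rw [add_mul]; exact Submodule.add_mem _ ha hb
          | smul d a _ ha =>
            have heq : (d • a) * algebraMap F L w = d • (a * algebraMap F L w) := by
              rw [smul_mul_assoc]
            have heq2 : d • (a * algebraMap F L w) =
                (algebraMap D (↥R) d) • (a * algebraMap F L w) :=
              (algebraMap_smul (↥R) d _).symm
            rw [heq, heq2]
            exact Submodule.smul_mem _ _ ha
        have hPc := hP (fflin c) hcNL
        rw [map_mul]
        rwa [hff] at hPc
      · intro t₁ t₂ h₁ h₂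
        rw [map_add]
        exact Submodule.add_mem _ h₁ h₂
    have h1' := hIJD 1 h1mem
    rw [map_one] at h1'
    rw [Submodule.one_eq_span]
    apply Submodule.span_le.2
    intro v hv
    rw [Set.mem_singleton_iff] at hv
    subst hv
    exact h1'



/-- Let `D` be a Dedekind domain with field of fractions `F`, a totally
real number field, and let `L` be a CM field with maximal totally real subfield `F`
(i.e. `L/F` is a totally imaginary quadratic extension).  Any `D`-subalgebra `R` of the
integral closure of `D` in `L` with `R ⊗ ℚ = L` is a Gorenstein ring. -/


theorem gorenstein_of_subalgebra_integralClosure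
    (D F L : Type*) [CommRing D] [IsDomain D] [IsDedekindDomain D]
    [Field F] [Algebra D F] [IsFractionRing D F] [NumberField F]
    (hF : IsTotallyRealField F)
    [Field L] [NumberField L] [Algebra F L] [Algebra D L] [IsScalarTower D F L]
    (hquad : Module.finrank F L = 2)
    (hL : IsTotallyImaginaryField L)
    (R : Subalgebra D L) (hR : R ≤ integralClosure D L)
    (hRQ : Submodule.span ℚ (R : Set L) = ⊤) :
    IsGorensteinOrder ↥R L := by
  haveI : FiniteDimensional F L := FiniteDimensional.of_finrank_eq_succ hquad
  exact my_key D F L hquad R hR (my_exists_conj F L hquad)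
    (fun I hI hRfg => my_fg_restrict R hRfg I hI)
    (fun σ J hJfg w hw p hp x' y' z' hx hy hz =>
      my_local D F L hquad σ J hJfg w hw p hp x' y' z' hx hy hz)
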